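/- arXiv:1903.05949 — 3 statements merged into one kernel-verified Lean document; each statement's English description precedes it below -/
import Mathlib

section
/- Let a₁, …, a_l be l distinct real numbers, d₁, …, d_l ∈ ℤ≥0, and let f_k = t - a_k v in S = ℝ[s,t,u,v] (bigraded with s,u of degree (1,0) and t,v of degree (0,1)). Then for (m,m') ∈ ℤ≥0², the dimension of the bidegree-(m,m') graded piece of the sum of ideals Σ_{k=1}^{l} f_k^{d_k} S(0,-d_k) equals (m+1) · min( m'+1, Σ_{k=1}^{l} max(m' - d_k + 1, 0) ). -/
namespace Stmt3Aux
open Polynomial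

noncomputable def step (j : ℕ) : Polynomial ℝ →ₗ[ℝ] Polynomial ℝ :=
  (LinearMap.mulLeft ℝ (X : Polynomial ℝ)).comp derivative - (j : ℝ) • LinearMap.id

lemma step_apply (j : ℕ) (p : Polynomial ℝ) :
    step j p = X * derivative p - (j : ℝ) • p := rfl

noncomputable def TT (c : ℕ) : ℕ → (Polynomial ℝ →ₗ[ℝ] Polynomial ℝ)
  | 0 => LinearMap.id
  | (s+1) => (step (c + s)).comp (TT c s)

lemma coeff_X_mul_derivative (p : Polynomial ℝ) (i : ℕ) :
    (X * derivative p).coeff i = (i : ℝ) * p.coeff i := by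
  cases i with
  | zero => simp
  | succ k =>
    rw [coeff_X_mul, coeff_derivative]
    push_cast
    ring

lemma coeff_step (j : ℕ) (p : Polynomial ℝ) (i : ℕ) :
    (step j p).coeff i = ((i : ℝ) - j) * p.coeff i := by
  rw [step_apply, coeff_sub, coeff_X_mul_derivative, coeff_smul]
  simp [smul_eq_mul]
  ring

lemma coeff_TT (c s : ℕ) (p : Polynomial ℝ) (i : ℕ) :
    (TT c s p).coeff i = (∏ j ∈ Finset.range s, ((i : ℝ) - (c + j))) * p.coeff i := by
  induction s with
  | zero => simp [TT]
  | succ s ih =>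
    show ((step (c + s)) (TT c s p)).coeff i = _
    rw [coeff_step, ih, Finset.prod_range_succ]
    push_cast
    ring

lemma TT_degree_lt (c s : ℕ) (p : Polynomial ℝ)
    (hp : p.degree < ((c + s : ℕ) : WithBot ℕ)) :
    (TT c s p).degree < (c : WithBot ℕ) := by
  rw [degree_lt_iff_coeff_zero]
  intro i hi
  have hi' : c ≤ i := by exact_mod_cast hi
  rw [coeff_TT]
  rcases lt_or_ge i (c + s) with h | h
  · apply mul_eq_zero_of_left
    refine Finset.prod_eq_zero (i := i - c) (by simp; omega) ?_
    rw [Nat.cast_sub hi']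
    ring
  · apply mul_eq_zero_of_right
    exact (degree_lt_iff_coeff_zero _ _).1 hp i (by exact_mod_cast h)

lemma TT_zero_imp_dvd (c s : ℕ) (p : Polynomial ℝ) (h : TT c s p = 0) :
    X ^ c ∣ p := by
  rw [X_pow_dvd_iff]
  intro i hi
  have h0 : (TT c s p).coeff i = 0 := by rw [h]; simp
  rw [coeff_TT] at h0
  rcases mul_eq_zero.1 h0 with h1 | h1
  · exfalso
    rcases Finset.prod_eq_zero_iff.1 h1 with ⟨j, hj, hj0⟩
    have : (i : ℝ) = ((c + j : ℕ) : ℝ) := by push_cast at hj0 ⊢; linarith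
    have : i = c + j := by exact_mod_cast this
    omega
  · exact h1

lemma TT_eq_zero (c s : ℕ) (p : Polynomial ℝ) (h1 : X ^ c ∣ p)
    (h2 : p.degree < ((c + s : ℕ) : WithBot ℕ)) : TT c s p = 0 := by
  ext i
  rw [coeff_TT]
  simp only [coeff_zero]
  rcases lt_or_ge i c with h | h
  · exact mul_eq_zero_of_right _ (X_pow_dvd_iff.1 h1 i h)
  rcases lt_or_ge i (c + s) with h' | h'
  · apply mul_eq_zero_of_left
    refine Finset.prod_eq_zero (i := i - c) (by simp; omega) ?_
    rw [Nat.cast_sub h]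
    ring
  · exact mul_eq_zero_of_right _ ((degree_lt_iff_coeff_zero _ _).1 h2 i (by exact_mod_cast h'))

lemma dvd_step (j : ℕ) (β : ℝ) (t : ℕ) (p : Polynomial ℝ)
    (h : (X - C β) ^ t ∣ p) : (X - C β) ^ (t - 1) ∣ step j p := by
  rcases t with _ | t
  · simp
  obtain ⟨q, rfl⟩ := h
  refine ⟨X * (((t+1 : ℕ) : Polynomial ℝ) * q + (X - C β) * derivative q)
      - C (j : ℝ) * ((X - C β) * q), ?_⟩
  rw [step_apply, derivative_mul, derivative_pow, derivative_X_sub_C, smul_eq_C_mul]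
  simp only [Nat.add_sub_cancel, pow_succ, ← C_eq_natCast]
  push_cast
  simp only [C_add, C_1]
  ring

lemma dvd_TT (c s : ℕ) (β : ℝ) (e : ℕ) (p : Polynomial ℝ)
    (h : (X - C β) ^ e ∣ p) : (X - C β) ^ (e - s) ∣ TT c s p := by
  induction s with
  | zero => simpa [TT]
  | succ s ih =>
    show _ ∣ step (c + s) (TT c s p)
    have := dvd_step (c + s) β (e - s) _ ih
    simpa [Nat.sub_sub] using this

end Stmt3Aux

namespace Stmt3Aux
open Polynomial

lemma degree_taylor' (r : ℝ) (p : Polynomial ℝ) : (taylor r p).degree = p.degree := by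
  by_cases hp : p = 0
  · simp [hp]
  · have h1 : taylor r p ≠ 0 := by
      intro h
      have := congrArg (⇑(taylor (-r))) h
      rw [taylor_taylor, neg_add_cancel, taylor_zero, map_zero] at this
      exact hp this
    rw [degree_eq_natDegree hp, degree_eq_natDegree h1, natDegree_taylor]

lemma degree_XsubC_pow (β : ℝ) (e : ℕ) :
    degree ((X - C β) ^ e) = (e : WithBot ℕ) := by
  rw [degree_pow, degree_X_sub_C]
  simp

lemma taylor_mul_pow (r β : ℝ) (e : ℕ) (p : Polynomial ℝ) :
    taylor r ((X - C β) ^ e * p) = (X - C (β - r)) ^ e * taylor r p := by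
  simp only [taylor_apply, mul_comp, pow_comp, sub_comp, X_comp, C_comp]
  congr 2
  rw [C_sub]
  ring

lemma keyU : ∀ (l : ℕ) (a : Fin l → ℝ), Function.Injective a →
    ∀ (b : Fin l → ℕ) (n : ℕ), (∑ k, b k) ≤ n →
    ∀ g : Fin l → Polynomial ℝ, (∀ k, (g k).degree < (b k : ℕ)) →
    (∑ k, (X - C (a k)) ^ (n - b k) * g k) = 0 → ∀ k, g k = 0 := by
  intro l
  induction l with
  | zero => intro a _ b n _ g _ _ k; exact k.elim0
  | succ l ih =>
    intro a ha b n hbn g hdeg hrel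
    set α := a (Fin.last l) with hα
    set A : Fin (l+1) → ℝ := fun k => a k - α with hA
    set G : Fin (l+1) → Polynomial ℝ := fun k => taylor α (g k) with hG
    set b0 := b (Fin.last l) with hb0def
    set c0 := n - b0 with hc0def
    have hb0 : b0 ≤ n :=
      le_trans (Finset.single_le_sum (f := b) (fun _ _ => Nat.zero_le _) (Finset.mem_univ _)) hbn
    have hsum_split : (∑ k : Fin l, b k.castSucc) + b0 = ∑ k : Fin (l+1), b k := by
      rw [Fin.sum_univ_castSucc]
    have hbk : ∀ k : Fin l, b k.castSucc + b0 ≤ n := by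
      intro k
      have h1 : b k.castSucc ≤ ∑ j : Fin l, b j.castSucc :=
        Finset.single_le_sum (f := fun j : Fin l => b j.castSucc)
          (fun _ _ => Nat.zero_le _) (Finset.mem_univ k)
      omega
    have hS : (∑ k : Fin l, b k.castSucc) ≤ c0 := by omega
    have hdegG : ∀ k, (G k).degree < ((b k : ℕ) : WithBot ℕ) := by
      intro k; rw [hG]; rw [degree_taylor']; exact hdeg k
    have hrel2 : (∑ k : Fin (l+1), (X - C (A k)) ^ (n - b k) * G k) = 0 := by
      have h2 := congrArg (⇑(taylor α)) hrel
      rw [map_sum, map_zero] at h2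
      calc (∑ k : Fin (l+1), (X - C (A k)) ^ (n - b k) * G k)
          = ∑ k : Fin (l+1), taylor α ((X - C (a k)) ^ (n - b k) * g k) := by
            apply Finset.sum_congr rfl
            intro k _
            rw [taylor_mul_pow]
        _ = 0 := h2
    have hT : (∑ k : Fin l,
        TT c0 b0 ((X - C (A k.castSucc)) ^ (n - b k.castSucc) * G k.castSucc))
        + TT c0 b0 ((X - C (A (Fin.last l))) ^ (n - b (Fin.last l)) * G (Fin.last l)) = 0 := by
      have h2 := congrArg (⇑(TT c0 b0)) hrel2
      rw [map_sum, map_zero, Fin.sum_univ_castSucc] at h2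
      exact h2
    have hAl : A (Fin.last l) = 0 := by simp [hA, hα]
    have hlast0 : TT c0 b0 ((X - C (A (Fin.last l))) ^ (n - b (Fin.last l)) * G (Fin.last l)) = 0 := by
      rw [hAl, C_0, sub_zero]
      apply TT_eq_zero
      · exact Dvd.dvd.mul_right dvd_rfl _
      · rw [degree_mul, degree_X_pow]
        calc (c0 : WithBot ℕ) + (G (Fin.last l)).degree
            < (c0 : WithBot ℕ) + (b0 : ℕ) :=
              WithBot.add_lt_add_left (by exact WithBot.coe_ne_bot) (hdegG (Fin.last l))
          _ = ((c0 + b0 : ℕ) : WithBot ℕ) := by push_cast; rfl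
    have hdvd : ∀ k : Fin l, ∃ hk : Polynomial ℝ,
        TT c0 b0 ((X - C (A k.castSucc)) ^ (n - b k.castSucc) * G k.castSucc)
          = (X - C (A k.castSucc)) ^ (c0 - b k.castSucc) * hk := by
      intro k
      have h1 := dvd_TT c0 b0 (A k.castSucc) (n - b k.castSucc)
        ((X - C (A k.castSucc)) ^ (n - b k.castSucc) * G k.castSucc) (dvd_mul_right _ _)
      rw [show (n - b k.castSucc) - b0 = c0 - b k.castSucc by omega] at h1
      obtain ⟨hk, e⟩ := h1
      exact ⟨hk, e⟩
    choose h hh using hdvd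
    have hdegT : ∀ k : Fin l,
        (TT c0 b0 ((X - C (A k.castSucc)) ^ (n - b k.castSucc) * G k.castSucc)).degree
          < (c0 : WithBot ℕ) := by
      intro k
      apply TT_degree_lt
      rw [degree_mul, degree_XsubC_pow]
      calc ((n - b k.castSucc : ℕ) : WithBot ℕ) + (G k.castSucc).degree
          < ((n - b k.castSucc : ℕ) : WithBot ℕ) + ((b k.castSucc : ℕ) : WithBot ℕ) :=
            WithBot.add_lt_add_left (by exact WithBot.coe_ne_bot) (hdegG k.castSucc)
        _ = (((n - b k.castSucc) + b k.castSucc : ℕ) : WithBot ℕ) := by push_cast; rfl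
        _ ≤ ((c0 + b0 : ℕ) : WithBot ℕ) := by
            have := hbk k
            exact_mod_cast (by omega : (n - b k.castSucc) + b k.castSucc ≤ c0 + b0)
    have hdegh : ∀ k : Fin l, (h k).degree < ((b k.castSucc : ℕ) : WithBot ℕ) := by
      intro k
      by_cases h0 : h k = 0
      · rw [h0, degree_zero]; exact WithBot.bot_lt_coe _
      · have h1 := hdegT k
        rw [hh k, degree_mul, degree_XsubC_pow, degree_eq_natDegree h0] at h1
        have h2 : (c0 - b k.castSucc) + (h k).natDegree < c0 := by exact_mod_cast h1
        have h3 : b k.castSucc ≤ c0 := by have := hbk k; omega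
        rw [degree_eq_natDegree h0]
        exact_mod_cast (by omega : (h k).natDegree < b k.castSucc)
    have hrel3 : (∑ k : Fin l, (X - C (A k.castSucc)) ^ (c0 - b k.castSucc) * h k) = 0 := by
      rw [hlast0, add_zero] at hT
      rw [← hT]
      apply Finset.sum_congr rfl
      intro k _
      exact (hh k).symm
    have hAinj : Function.Injective fun k : Fin l => A k.castSucc := by
      intro x y hxy
      have : a x.castSucc = a y.castSucc := by
        have := hxy
        simp only [hA] at this
        linarith [this]
      exact Fin.castSucc_injective l (ha this)
    have hzero : ∀ k : Fin l, h k = 0 :=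
      ih (fun k => A k.castSucc) hAinj (fun k => b k.castSucc) c0 hS h hdegh hrel3
    have hGcast : ∀ k : Fin l, G k.castSucc = 0 := by
      intro k
      have hTz : TT c0 b0 ((X - C (A k.castSucc)) ^ (n - b k.castSucc) * G k.castSucc) = 0 := by
        rw [hh k, hzero k, mul_zero]
      have hXdvd : X ^ c0 ∣ (X - C (A k.castSucc)) ^ (n - b k.castSucc) * G k.castSucc :=
        TT_zero_imp_dvd _ _ _ hTz
      have hfdvd : (X - C (A k.castSucc)) ^ (n - b k.castSucc) ∣
          (X - C (A k.castSucc)) ^ (n - b k.castSucc) * G k.castSucc := dvd_mul_right _ _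
      have hAne : A k.castSucc ≠ 0 := by
        intro hcon
        have : a k.castSucc = α := by
          simp only [hA] at hcon; linarith
      -- a k.castSucc = a last contradicts injectivity
        have := ha this
        exact absurd this (Fin.ne_of_lt (Fin.castSucc_lt_last k))
      have hcop : IsCoprime ((X : Polynomial ℝ) ^ c0)
          ((X - C (A k.castSucc)) ^ (n - b k.castSucc)) := by
        have hbase : IsCoprime (X : Polynomial ℝ) (X - C (A k.castSucc)) := by
          refine ⟨C (A k.castSucc)⁻¹, -C (A k.castSucc)⁻¹, ?_⟩
          have h1 : (A k.castSucc)⁻¹ * (A k.castSucc) = 1 := inv_mul_cancel₀ hAne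
          rw [← C_1, ← h1, C_mul]
          ring
        exact hbase.pow
      by_cases hGz : G k.castSucc = 0
      · exact hGz
      · exfalso
        have hmul := hcop.mul_dvd hXdvd hfdvd
        have hterm0 := eq_zero_of_dvd_of_degree_lt hmul ?_
        · have := mul_eq_zero.1 hterm0
          rcases this with h1 | h1
          · exact pow_ne_zero _ (X_sub_C_ne_zero _) h1
          · exact hGz h1
        · rw [degree_mul, degree_mul, degree_X_pow, degree_XsubC_pow]
          calc ((n - b k.castSucc : ℕ) : WithBot ℕ) + (G k.castSucc).degree
              < ((n - b k.castSucc : ℕ) : WithBot ℕ) + ((b k.castSucc : ℕ) : WithBot ℕ) :=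
                WithBot.add_lt_add_left (by exact WithBot.coe_ne_bot) (hdegG k.castSucc)
            _ = (((n - b k.castSucc) + b k.castSucc : ℕ) : WithBot ℕ) := by push_cast; rfl
            _ ≤ ((c0 + (n - b k.castSucc) : ℕ) : WithBot ℕ) := by
                have h3 := hbk k
                exact_mod_cast (by omega : (n - b k.castSucc) + b k.castSucc ≤ c0 + (n - b k.castSucc))
            _ = (c0 : WithBot ℕ) + ((n - b k.castSucc : ℕ) : WithBot ℕ) := by push_cast; rfl
    have hGlast : G (Fin.last l) = 0 := by
      have h2 : (∑ k : Fin (l+1), (X - C (A k)) ^ (n - b k) * G k)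
          = (X - C (A (Fin.last l))) ^ (n - b (Fin.last l)) * G (Fin.last l) := by
        rw [Fin.sum_univ_castSucc]
        rw [Finset.sum_eq_zero, zero_add]
        intro k _
        rw [hGcast k, mul_zero]
      rw [hrel2, hAl, C_0, sub_zero] at h2
      have := h2.symm
      rcases mul_eq_zero.1 this with h1 | h1
      · exact absurd h1 (pow_ne_zero _ X_ne_zero)
      · exact h1
    intro k
    have hGk : G k = 0 := by
      rcases Fin.eq_castSucc_or_eq_last k with ⟨j, rfl⟩ | rfl
      · exact hGcast j
      · exact hGlast
    have h2 := congrArg (⇑(taylor (-α))) hGk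
    rwa [hG, taylor_taylor, neg_add_cancel, taylor_zero, map_zero] at h2

end Stmt3Aux

namespace Stmt3Aux
open Polynomial

lemma taylor_pow_self (r : ℝ) (s : ℕ) : taylor r ((X - C r) ^ s) = X ^ s := by
  have h := taylor_mul_pow r r s 1
  simpa using h

lemma ukey (l : ℕ) (a : Fin l → ℝ) (ha : Function.Injective a) (b : Fin l → ℕ) (m' : ℕ)
    (hbn : (∑ k, b k) ≤ m' + 1) :
    LinearIndependent ℝ
      (fun x : Σ k : Fin l, Fin (b k) => (X - C (a x.1)) ^ (m' - (x.2 : ℕ))) := by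
  rw [Fintype.linearIndependent_iff]
  intro c hc
  set g : Fin l → Polynomial ℝ :=
    fun k => ∑ r : Fin (b k), c ⟨k, r⟩ • (X - C (a k)) ^ (b k - 1 - (r : ℕ)) with hg
  have hb_le : ∀ k, b k ≤ m' + 1 := fun k =>
    le_trans (Finset.single_le_sum (fun _ _ => Nat.zero_le _) (Finset.mem_univ k)) hbn
  have hdeg : ∀ k, (g k).degree < ((b k : ℕ) : WithBot ℕ) := by
    intro k
    apply lt_of_le_of_lt (degree_sum_le _ _)
    rw [Finset.sup_lt_iff (by exact WithBot.bot_lt_coe _)]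
    intro r _
    apply lt_of_le_of_lt (degree_smul_le _ _)
    rw [degree_XsubC_pow]
    have hr : (r : ℕ) < b k := r.2
    exact_mod_cast (by omega : b k - 1 - (r : ℕ) < b k)
  have hrel : (∑ k, (X - C (a k)) ^ ((m' + 1) - b k) * g k) = 0 := by
    rw [← hc, ← Finset.univ_sigma_univ, Finset.sum_sigma]
    apply Finset.sum_congr rfl
    intro k _
    rw [hg, Finset.mul_sum]
    apply Finset.sum_congr rfl
    intro r _
    rw [mul_smul_comm, ← pow_add]
    have hr : (r : ℕ) < b k := r.2
    have hbk := hb_le k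
    congr 2
    show (m' + 1 - b k) + (b k - 1 - (r : ℕ)) = m' - (r : ℕ)
    omega
  have hzero := keyU l a ha b (m' + 1) hbn g hdeg hrel
  intro x
  obtain ⟨k, r⟩ := x
  have h3 : (∑ r' : Fin (b k), c ⟨k, r'⟩ • (X : Polynomial ℝ) ^ (b k - 1 - (r' : ℕ))) = 0 := by
    have h1 : (taylor (a k)) (g k) = 0 := by rw [hzero k, map_zero]
    rw [hg] at h1
    simp only [map_sum, map_smul, taylor_pow_self] at h1
    exact h1
  have h4 := congrArg (fun p => Polynomial.coeff p (b k - 1 - (r : ℕ))) h3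
  simp only [finset_sum_coeff, coeff_smul, coeff_X_pow, coeff_zero, smul_eq_mul,
    mul_ite, mul_one, mul_zero] at h4
  rw [Finset.sum_eq_single r] at h4
  · simpa using h4
  · intro r' _ hne
    rw [if_neg]
    intro hcon
    apply hne
    have h5 : (r' : ℕ) < b k := r'.2
    have h6 : (r : ℕ) < b k := r.2
    have : (r' : ℕ) = (r : ℕ) := by omega
    exact Fin.ext this
  · intro hmem
    exact absurd (Finset.mem_univ r) hmem

end Stmt3Aux

namespace Stmt3Aux
open Polynomial

lemma pindep {ι : Type} [Fintype ι] (w : ι → Polynomial ℝ)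
    (hw : LinearIndependent ℝ w) (M : ℕ) :
    LinearIndependent ℝ (fun q : Fin M × ι =>
      (Polynomial.X : Polynomial (Polynomial ℝ)) ^ (q.1 : ℕ) * Polynomial.C (w q.2)) := by
  rw [Fintype.linearIndependent_iff] at hw ⊢
  intro c hc q
  obtain ⟨i0, α0⟩ := q
  have h1 := congrArg (fun p => Polynomial.coeff p (i0 : ℕ)) hc
  simp only [finset_sum_coeff, coeff_smul, coeff_zero] at h1
  have h2 : ∀ (i : Fin M) (αa : ι),
      ((Polynomial.X : Polynomial (Polynomial ℝ)) ^ (i : ℕ) * Polynomial.C (w αa)).coeff (i0 : ℕ)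
        = if i0 = i then w αa else 0 := by
    intro i αa
    rw [mul_comm, coeff_C_mul, coeff_X_pow]
    by_cases hii : i0 = i
    · subst hii; simp
    · rw [if_neg (by simpa [Fin.val_eq_val] using hii), if_neg hii, mul_zero]
  simp only [h2, smul_ite, smul_zero] at h1
  rw [Fintype.sum_prod_type_right] at h1
  simp only [Finset.sum_ite_eq, Finset.mem_univ, if_true] at h1
  exact hw (fun αa => c (i0, αa)) h1 α0

lemma key4 (l m m' : ℕ) (a : Fin l → ℝ) (ha : Function.Injective a) (b : Fin l → ℕ)
    (hbn : (∑ k, b k) ≤ m' + 1) :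
    LinearIndependent ℝ (fun q : Fin (m+1) × (Σ k : Fin l, Fin (b k)) =>
      (MvPolynomial.X 0 : MvPolynomial (Fin 4) ℝ) ^ (q.1 : ℕ)
        * (MvPolynomial.X 1 - MvPolynomial.C (a q.2.1) * MvPolynomial.X 3) ^ (m' - (q.2.2 : ℕ))
        * MvPolynomial.X 2 ^ (m - (q.1 : ℕ)) * MvPolynomial.X 3 ^ ((q.2.2 : ℕ))) := by
  have hu := ukey l a ha b m' hbn
  have hp := pindep _ hu (m+1)
  set g4 : Fin 4 → Polynomial (Polynomial ℝ) :=
    ![Polynomial.X, Polynomial.C Polynomial.X, 1, 1] with hg4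
  set ev := (MvPolynomial.aeval g4 :
    MvPolynomial (Fin 4) ℝ →ₐ[ℝ] Polynomial (Polynomial ℝ)) with hev
  apply LinearIndependent.of_comp ev.toLinearMap
  have hcomp : (⇑ev.toLinearMap ∘ fun q : Fin (m+1) × (Σ k : Fin l, Fin (b k)) =>
      (MvPolynomial.X 0 : MvPolynomial (Fin 4) ℝ) ^ (q.1 : ℕ)
        * (MvPolynomial.X 1 - MvPolynomial.C (a q.2.1) * MvPolynomial.X 3) ^ (m' - (q.2.2 : ℕ))
        * MvPolynomial.X 2 ^ (m - (q.1 : ℕ)) * MvPolynomial.X 3 ^ ((q.2.2 : ℕ)))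
      = fun q : Fin (m+1) × (Σ k : Fin l, Fin (b k)) =>
        (Polynomial.X : Polynomial (Polynomial ℝ)) ^ (q.1 : ℕ)
          * Polynomial.C ((Polynomial.X - Polynomial.C (a q.2.1)) ^ (m' - (q.2.2 : ℕ))) := by
    funext q
    simp only [Function.comp_apply, AlgHom.toLinearMap_apply, hev, map_mul, map_pow, map_sub,
      MvPolynomial.aeval_X, MvPolynomial.aeval_C, hg4]
    simp only [Matrix.cons_val_zero, Matrix.cons_val_one, Matrix.head_cons,
      Matrix.cons_val_two, Matrix.tail_cons, Matrix.cons_val_three, Matrix.head_fin_const]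
    rw [Polynomial.algebraMap_apply, Polynomial.algebraMap_apply]
    simp only [Algebra.algebraMap_self, RingHom.id_apply, one_pow, mul_one]
  rw [hcomp]
  exact hp

end Stmt3Aux


open MvPolynomial

/-- The bihomogeneous piece of `S = ℝ[s,t,u,v]` of bidegree `(a, b)`. -/
noncomputable def biPiece (a b : ℤ) : Submodule ℝ (MvPolynomial (Fin 4) ℝ) :=
  Submodule.span ℝ {p | ∃ e : Fin 4 →₀ ℕ,
    ((e 0 : ℤ) + e 2 = a) ∧ ((e 1 : ℤ) + e 3 = b) ∧ p = monomial e 1}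

namespace Stmt3Aux

lemma biPiece_neg (aa bb : ℤ) (h : bb < 0) : biPiece aa bb = ⊥ := by
  rw [biPiece, show {p | ∃ e : Fin 4 →₀ ℕ,
      ((e 0 : ℤ) + e 2 = aa) ∧ ((e 1 : ℤ) + e 3 = bb) ∧ p = monomial e 1}
      = (∅ : Set (MvPolynomial (Fin 4) ℝ)) from ?_, Submodule.span_empty]
  ext p
  simp only [Set.mem_setOf_eq, Set.mem_empty_iff_false, iff_false]
  rintro ⟨e, h1, h2, h3⟩
  omega

lemma monomial_eq_prod (e : Fin 4 →₀ ℕ) :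
    (monomial e (1:ℝ) : MvPolynomial (Fin 4) ℝ)
      = X 0 ^ (e 0) * X 1 ^ (e 1) * X 2 ^ (e 2) * X 3 ^ (e 3) := by
  have he : e = Finsupp.single 0 (e 0) + Finsupp.single 1 (e 1)
      + Finsupp.single 2 (e 2) + Finsupp.single 3 (e 3) := by
    ext x
    fin_cases x <;> simp [Finsupp.single_apply]
  nth_rewrite 1 [he]
  simp [X_pow_eq_monomial, monomial_mul]

noncomputable def fam (m bn : ℕ) (α : ℝ) (p : Fin (m+1) × Fin (bn+1)) :
    MvPolynomial (Fin 4) ℝ :=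
  X 0 ^ (p.1 : ℕ) * (X 1 - C α * X 3) ^ (p.2 : ℕ)
    * X 2 ^ (m - (p.1 : ℕ)) * X 3 ^ (bn - (p.2 : ℕ))

lemma biPiece_eq_span_fam0 (m bn : ℕ) :
    biPiece (m : ℤ) (bn : ℤ) = Submodule.span ℝ (Set.range (fam m bn 0)) := by
  rw [biPiece]
  congr 1
  ext p
  simp only [Set.mem_setOf_eq, Set.mem_range]
  constructor
  · rintro ⟨e, h1, h2, rfl⟩
    refine ⟨(⟨e 0, by omega⟩, ⟨e 1, by omega⟩), ?_⟩
    simp only [fam, C_0, zero_mul, sub_zero]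
    rw [monomial_eq_prod]
    have h3 : e 2 = m - e 0 := by omega
    have h4 : e 3 = bn - e 1 := by omega
    rw [h3, h4]
  · rintro ⟨⟨i, j⟩, rfl⟩
    have hi : (i : ℕ) ≤ m := by omega
    have hj : (j : ℕ) ≤ bn := by omega
    refine ⟨Finsupp.single 0 (i : ℕ) + Finsupp.single 1 (j : ℕ)
      + Finsupp.single 2 (m - (i : ℕ)) + Finsupp.single 3 (bn - (j : ℕ)), ?_, ?_, ?_⟩
    · simp [Finsupp.single_apply]
      omega
    · simp [Finsupp.single_apply]
      omega
    · rw [monomial_eq_prod]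
      simp [fam, C_0, zero_mul, sub_zero, Finsupp.add_apply, Finsupp.single_apply]

lemma span_fam_le (m bn : ℕ) (γ δ : ℝ) :
    Submodule.span ℝ (Set.range (fam m bn γ)) ≤ Submodule.span ℝ (Set.range (fam m bn δ)) := by
  rw [Submodule.span_le]
  rintro _ ⟨⟨i, j⟩, rfl⟩
  have hXj : (X 1 - C γ * X 3 : MvPolynomial (Fin 4) ℝ) ^ (j : ℕ)
      = ∑ w ∈ Finset.range ((j : ℕ) + 1),
          (X 1 - C δ * X 3) ^ w * (C (δ - γ) * X 3) ^ ((j : ℕ) - w)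
            * ((j : ℕ).choose w : MvPolynomial (Fin 4) ℝ) := by
    rw [← add_pow]
    congr 1
    rw [C_sub]
    ring
  show fam m bn γ (i, j) ∈ _
  rw [fam]
  simp only []
  rw [hXj, Finset.mul_sum, Finset.sum_mul, Finset.sum_mul]
  apply Submodule.sum_mem
  intro w hw
  have hwj : w ≤ (j : ℕ) := by have := Finset.mem_range.1 hw; omega
  have hjbn : (j : ℕ) ≤ bn := by omega
  have hw' : w < bn + 1 := by omega
  have hkey : X 0 ^ (i : ℕ) * ((X 1 - C δ * X 3) ^ w * (C (δ - γ) * X 3) ^ ((j : ℕ) - w)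
        * ((j : ℕ).choose w : MvPolynomial (Fin 4) ℝ))
        * X 2 ^ (m - (i : ℕ)) * X 3 ^ (bn - (j : ℕ))
      = ((δ - γ) ^ ((j : ℕ) - w) * ((j : ℕ).choose w : ℝ)) • fam m bn δ (i, ⟨w, hw'⟩) := by
    rw [smul_eq_C_mul, fam]
    simp only []
    rw [show bn - w = ((j : ℕ) - w) + (bn - (j : ℕ)) from by omega, pow_add, mul_pow,
      C_mul, C_pow]
    rw [show ((j : ℕ).choose w : MvPolynomial (Fin 4) ℝ) = C ((j : ℕ).choose w : ℝ) from by
      simp [MvPolynomial.C_eq_coe_nat]]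
    ring
  rw [hkey]
  exact Submodule.smul_mem _ _ (Submodule.subset_span ⟨(i, ⟨w, hw'⟩), rfl⟩)

lemma biPiece_eq_span_fam (m bn : ℕ) (α : ℝ) :
    biPiece (m : ℤ) (bn : ℤ) = Submodule.span ℝ (Set.range (fam m bn α)) := by
  rw [biPiece_eq_span_fam0]
  exact le_antisymm (span_fam_le m bn 0 α) (span_fam_le m bn α 0)

noncomputable def ffam (l m m' : ℕ) (a : Fin l → ℝ) (b : Fin l → ℕ)
    (q : Fin (m+1) × Σ k : Fin l, Fin (b k)) : MvPolynomial (Fin 4) ℝ :=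
  X 0 ^ (q.1 : ℕ) * (X 1 - C (a q.2.1) * X 3) ^ (m' - (q.2.2 : ℕ))
    * X 2 ^ (m - (q.1 : ℕ)) * X 3 ^ ((q.2.2 : ℕ))

lemma T_eq_span (l m m' : ℕ) (a : Fin l → ℝ) (d : Fin l → ℕ) :
    (⨆ k : Fin l, Submodule.map
      (LinearMap.mulLeft ℝ ((X 1 - C (a k) * X 3 : MvPolynomial (Fin 4) ℝ) ^ d k))
      (biPiece (m : ℤ) ((m' : ℤ) - d k)))
    = Submodule.span ℝ (Set.range (ffam l m m' a (fun k => m' + 1 - d k))) := by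
  apply le_antisymm
  · apply iSup_le
    intro k
    by_cases hk : d k ≤ m'
    · have hcast : ((m' : ℤ) - d k) = ((m' - d k : ℕ) : ℤ) := by omega
      rw [hcast, biPiece_eq_span_fam m (m' - d k) (a k), Submodule.map_span, ← Set.range_comp,
        Submodule.span_le]
      rintro _ ⟨⟨i, j⟩, rfl⟩
      apply Submodule.subset_span
      have hj : (j : ℕ) ≤ m' - d k := by omega
      refine ⟨(i, ⟨k, ⟨m' - (d k + (j : ℕ)), by omega⟩⟩), ?_⟩
      simp only [Function.comp_apply, LinearMap.mulLeft_apply, ffam, fam]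
      rw [show m' - (m' - (d k + (j : ℕ))) = d k + (j : ℕ) from by omega]
      rw [show (m' - d k) - (j : ℕ) = m' - (d k + (j : ℕ)) from by omega]
      rw [pow_add]
      ring
    · rw [biPiece_neg _ _ (by omega), Submodule.map_bot]
      exact bot_le
  · rw [Submodule.span_le]
    rintro _ ⟨⟨i, ⟨k, r⟩⟩, rfl⟩
    have hr : (r : ℕ) < m' + 1 - d k := r.2
    have hk : d k ≤ m' := by omega
    apply Submodule.mem_iSup_of_mem k
    have hcast : ((m' : ℤ) - d k) = ((m' - d k : ℕ) : ℤ) := by omega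
    rw [hcast, biPiece_eq_span_fam m (m' - d k) (a k), Submodule.map_span, ← Set.range_comp]
    apply Submodule.subset_span
    refine ⟨(i, ⟨(m' - d k) - (r : ℕ), by omega⟩), ?_⟩
    simp only [Function.comp_apply, LinearMap.mulLeft_apply, ffam, fam]
    rw [show (m' - d k) - ((m' - d k) - (r : ℕ)) = (r : ℕ) from by omega]
    rw [show m' - (r : ℕ) = d k + ((m' - d k) - (r : ℕ)) from by omega, pow_add]
    ring

end Stmt3Aux

namespace Stmt3Aux

lemma choose_sub {ι : Type} [DecidableEq ι] (s : Finset ι) (f : ι → ℕ) (n : ℕ)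
    (h : n ≤ ∑ i ∈ s, f i) :
    ∃ g : ι → ℕ, (∀ i, g i ≤ f i) ∧ (∑ i ∈ s, g i) = n := by
  induction s using Finset.induction_on generalizing n with
  | empty =>
    refine ⟨fun _ => 0, fun _ => Nat.zero_le _, ?_⟩
    simp only [Finset.sum_empty]
    simpa using h.antisymm (Nat.zero_le n) |>.symm
  | insert aa s ha ih =>
    rw [Finset.sum_insert ha] at h
    rcases le_or_gt n (∑ i ∈ s, f i) with hn | hn
    · obtain ⟨g, hg, hsum⟩ := ih n hn
      refine ⟨Function.update g aa 0, ?_, ?_⟩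
      · intro i
        rcases eq_or_ne i aa with rfl | hi
        · simp
        · rw [Function.update_of_ne hi]; exact hg i
      · rw [Finset.sum_insert ha, Function.update_self, zero_add]
        rw [Finset.sum_congr rfl fun i hi => Function.update_of_ne (fun hc : i = aa => ha (hc ▸ hi)) 0 g]
        exact hsum
    · refine ⟨Function.update f aa (n - ∑ i ∈ s, f i), ?_, ?_⟩
      · intro i
        rcases eq_or_ne i aa with rfl | hi
        · rw [Function.update_self]; omega
        · rw [Function.update_of_ne hi]
      · rw [Finset.sum_insert ha, Function.update_self]
        rw [Finset.sum_congr rfl fun i hi => Function.update_of_ne (fun hc : i = aa => ha (hc ▸ hi)) _ f]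
        exact Nat.sub_add_cancel (le_of_lt hn)

end Stmt3Aux


/-- for distinct reals `a₁, …, a_l`, `d₁, …, d_l ∈ ℕ` and
`f_k = t - a_k v`, the bidegree-`(m,m')` piece of `Σ_k f_k^{d_k} S(0,-d_k)`,
i.e. `Σ_k f_k^{d_k} · S_{(m, m'-d_k)}`, has dimension
`(m+1) · min (m'+1) (Σ_k max (m'-d_k+1) 0)`. -/
theorem stmt3 (l : ℕ) (a : Fin l → ℝ) (ha : Function.Injective a)
    (d : Fin l → ℕ) (m m' : ℕ) :
    (Module.finrank ℝ
        ↥(⨆ k : Fin l, Submodule.map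
          (LinearMap.mulLeft ℝ
            ((X 1 - C (a k) * X 3 : MvPolynomial (Fin 4) ℝ) ^ d k))
          (biPiece (m : ℤ) ((m' : ℤ) - d k))) : ℤ) =
      ((m : ℤ) + 1) * min ((m' : ℤ) + 1) (∑ k, max ((m' : ℤ) - d k + 1) 0) := by
  classical
  have key : Module.finrank ℝ
      (Submodule.span ℝ (Set.range (Stmt3Aux.ffam l m m' a (fun k => m' + 1 - d k))))
      = (m+1) * min (m'+1) (∑ k, (m' + 1 - d k)) := by
    set b : Fin l → ℕ := fun k => m' + 1 - d k with hb
    rw [show (∑ k, (m' + 1 - d k)) = ∑ k, b k from rfl]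
    rcases le_or_gt (∑ k, b k) (m'+1) with hle | hlt
    · have hind : LinearIndependent ℝ (Stmt3Aux.ffam l m m' a b) :=
        Stmt3Aux.key4 l m m' a ha b hle
      rw [finrank_span_eq_card hind, min_eq_right hle]
      simp [Fintype.card_sigma]
    · obtain ⟨g, hg, hgsum⟩ := Stmt3Aux.choose_sub Finset.univ b (m'+1) hlt.le
      rw [min_eq_left (by omega)]
      haveI := FiniteDimensional.span_of_finite ℝ (Set.finite_range (Stmt3Aux.ffam l m m' a b))
      haveI := FiniteDimensional.span_of_finite ℝ (Set.finite_range (Stmt3Aux.fam m m' 0))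
      apply le_antisymm
      · have hup : Submodule.span ℝ (Set.range (Stmt3Aux.ffam l m m' a b))
            ≤ Submodule.span ℝ (Set.range (Stmt3Aux.fam m m' 0)) := by
          rw [Submodule.span_le]
          rintro _ ⟨⟨i, k, r⟩, rfl⟩
          have hr : (r : ℕ) < m' + 1 - d k := r.2
          have hmem : Stmt3Aux.ffam l m m' a b (i, ⟨k, r⟩)
              ∈ Submodule.span ℝ (Set.range (Stmt3Aux.fam m m' (a k))) := by
            apply Submodule.subset_span
            refine ⟨(i, ⟨m' - (r : ℕ), by omega⟩), ?_⟩
            simp only [Stmt3Aux.fam, Stmt3Aux.ffam]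
            rw [show m' - (m' - (r : ℕ)) = (r : ℕ) from by omega]
          exact Stmt3Aux.span_fam_le m m' (a k) 0 hmem
        calc Module.finrank ℝ (Submodule.span ℝ (Set.range (Stmt3Aux.ffam l m m' a b)))
            ≤ Module.finrank ℝ (Submodule.span ℝ (Set.range (Stmt3Aux.fam m m' 0))) :=
              Submodule.finrank_mono hup
          _ ≤ Fintype.card (Fin (m+1) × Fin (m'+1)) := finrank_range_le_card _
          _ = (m+1) * (m'+1) := by simp
      · have hind : LinearIndependent ℝ (Stmt3Aux.ffam l m m' a g) :=
          Stmt3Aux.key4 l m m' a ha g (le_of_eq hgsum)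
        have hsub : Submodule.span ℝ (Set.range (Stmt3Aux.ffam l m m' a g))
            ≤ Submodule.span ℝ (Set.range (Stmt3Aux.ffam l m m' a b)) := by
          apply Submodule.span_mono
          rintro _ ⟨⟨i, k, r⟩, rfl⟩
          exact ⟨(i, ⟨k, ⟨(r : ℕ), lt_of_lt_of_le r.2 (hg k)⟩⟩), rfl⟩
        calc (m+1) * (m'+1)
            = Fintype.card (Fin (m+1) × Σ k : Fin l, Fin (g k)) := by
              simp [Fintype.card_sigma, hgsum]
          _ = Module.finrank ℝ (Submodule.span ℝ (Set.range (Stmt3Aux.ffam l m m' a g))) :=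
              (finrank_span_eq_card hind).symm
          _ ≤ _ := Submodule.finrank_mono hsub
  rw [Stmt3Aux.T_eq_span l m m' a d, key]
  have hsum : (∑ k, ((m' + 1 - d k : ℕ) : ℤ)) = ∑ k, max ((m' : ℤ) - d k + 1) 0 := by
    apply Finset.sum_congr rfl
    intro k _
    omega
  push_cast
  rw [hsum]
end

section
/- Let p, p' ∈ ℝ[s,t] be polynomials, and let l = s - a for some a ∈ ℝ. Define the piecewise function f on ℝ² by f(x,y) = p(x,y) if x ≤ a and f(x,y) = p'(x,y) if x ≥ a. Then f is r times continuously differentiable if and only if p - p' lies in the ideal generated by l^{r+1}. -/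
open MvPolynomial

namespace BR

lemma lemA {g : ℝ → ℝ} {n : ℕ} (hg : ContDiff ℝ n g) {s : Set ℝ} (hs : UniqueDiffOn ℝ s)
    {x : ℝ} (hx : x ∈ s) {m : ℕ} (hm : m ≤ n) :
    iteratedDerivWithin m g s x = iteratedDeriv m g x := by
  have h1 : HasFTaylorSeriesUpTo (n : ℕ∞) g (ftaylorSeries ℝ g) :=
    (contDiff_iff_ftaylorSeries.mp (hg.of_le (by exact_mod_cast le_refl (n : ℕ∞))))
  have h2 := (h1.hasFTaylorSeriesUpToOn s).eq_iteratedFDerivWithin_of_uniqueDiffOn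
    (m := m) (by exact_mod_cast hm) hs hx
  rw [iteratedDerivWithin_eq_iteratedFDerivWithin, iteratedDeriv_eq_iteratedFDeriv, ← h2]
  rfl

open Polynomial in
lemma iteratedDeriv_polyEval (q : Polynomial ℝ) (k : ℕ) :
    iteratedDeriv k (fun x => q.eval x) = fun x => (derivative^[k] q).eval x := by
  induction k with
  | zero => simp
  | succ k ih =>
      rw [iteratedDeriv_succ, ih, Function.iterate_succ_apply']
      funext x
      exact Polynomial.deriv _

lemma contDiff_polyEval (q : Polynomial ℝ) (n : ℕ) : ContDiff ℝ n fun x : ℝ => q.eval x := by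
  induction q using Polynomial.induction_on' with
  | add p q hp hq => simpa using hp.add hq
  | monomial k a => simpa [Polynomial.eval_monomial] using contDiff_const.mul (contDiff_id.pow k)

open Polynomial in
lemma key {g : ℝ → ℝ} {n : ℕ} (hg : ContDiff ℝ n g) {s : Set ℝ} (hs : UniqueDiffOn ℝ s)
    {a : ℝ} (ha : a ∈ s) {q : Polynomial ℝ} (h : ∀ x ∈ s, g x = q.eval x) {k : ℕ} (hk : k ≤ n) :
    iteratedDeriv k g a = (derivative^[k] q).eval a := by
  have e1 : iteratedDerivWithin k g s a = iteratedDerivWithin k (fun x => q.eval x) s a :=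
    iteratedDerivWithin_congr (fun x hx => h x hx) ha
  rw [← lemA hg hs ha hk, e1, lemA (contDiff_polyEval q k) hs ha le_rfl,
    iteratedDeriv_polyEval]

lemma abs_min_le (y : ℝ) : |min y 0| ≤ |y| := by
  rcases le_total y 0 with h|h
  · rw [min_eq_left h]
  · rw [min_eq_right h]; simp [abs_nonneg]

lemma hasDerivAt_minpow (n : ℕ) (x : ℝ) :
    HasDerivAt (fun x : ℝ => (min x 0) ^ (n + 2)) ((n + 2) * (min x 0) ^ (n + 1)) x := by
  rcases lt_trichotomy x 0 with hx | rfl | hx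
  · have he : (fun x : ℝ => (min x 0) ^ (n + 2)) =ᶠ[nhds x] fun x => x ^ (n + 2) := by
      filter_upwards [Iio_mem_nhds hx] with y hy
      rw [min_eq_left (le_of_lt hy)]
    have := (hasDerivAt_pow (n + 2) x).congr_of_eventuallyEq he
    simpa [min_eq_left hx.le] using this
  · have h0 : min (0:ℝ) 0 = 0 := min_self 0
    have hz1 : (0:ℝ) ^ (n + 1) = 0 := zero_pow (by omega)
    have hz2 : (0:ℝ) ^ (n + 2) = 0 := zero_pow (by omega)
    rw [hasDerivAt_iff_isLittleO]
    simp only [h0, hz1, hz2, sub_zero, smul_zero, mul_zero]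
    have hc : Continuous fun y : ℝ => |min y 0| ^ (n + 1) :=
      ((continuous_id.min continuous_const).abs.pow _)
    rw [Asymptotics.isLittleO_iff]
    intro c hc'
    have ht : Filter.Tendsto (fun y : ℝ => |min y 0| ^ (n + 1)) (nhds 0) (nhds 0) := by
      have := hc.tendsto 0
      simpa [h0, hz1] using this
    filter_upwards [ht.eventually_lt_const hc'] with y hy
    calc ‖(min y 0) ^ (n + 2)‖ = |min y 0| ^ (n + 1) * |min y 0| := by
          rw [Real.norm_eq_abs, abs_pow, pow_succ]
      _ ≤ c * ‖y‖ := by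
          rw [Real.norm_eq_abs]
          exact mul_le_mul hy.le (abs_min_le y) (abs_nonneg _) hc'.le
  · have he : (fun x : ℝ => (min x 0) ^ (n + 2)) =ᶠ[nhds x] fun _ : ℝ => (0:ℝ) := by
      filter_upwards [Ioi_mem_nhds hx] with y hy
      rw [min_eq_right (le_of_lt hy), zero_pow (by omega)]
    have := (hasDerivAt_const x (0:ℝ)).congr_of_eventuallyEq he
    simpa [min_eq_right hx.le, zero_pow] using this

lemma contDiff_minpow (r : ℕ) : ContDiff ℝ r (fun x : ℝ => (min x 0) ^ (r + 1)) := by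
  induction r with
  | zero =>
      rw [show ((0:ℕ) : WithTop ℕ∞) = 0 by rfl, contDiff_zero]
      simpa using ((continuous_id : Continuous (id : ℝ → ℝ)).min continuous_const).pow 1
  | succ r ih =>
      have hcast : ((r + 1 : ℕ) : WithTop ℕ∞) = (r : WithTop ℕ∞) + 1 := by push_cast; rfl
      rw [hcast, contDiff_succ_iff_deriv]
      refine ⟨fun x => (hasDerivAt_minpow r x).differentiableAt, ?_, ?_⟩
      · intro h; exact absurd h (by simp)
      · have : deriv (fun x : ℝ => (min x 0) ^ (r + 2)) =
            fun x : ℝ => ((r : ℝ) + 2) * (min x 0) ^ (r + 1) := by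
          funext x; exact (hasDerivAt_minpow r x).deriv
        rw [show r + 1 + 1 = r + 2 from rfl, this]
        exact contDiff_const.mul ih

open Polynomial in
lemma dvd_of_derivs {R : Type*} [CommRing R] [IsDomain R] [CharZero R] {Q : R[X]} {c : R} {r : ℕ}
    (h : ∀ k ≤ r, (derivative^[k] Q).eval c = 0) :
    (Polynomial.X - Polynomial.C c) ^ (r + 1) ∣ Q := by
  have hT : ∀ k ≤ r, (taylor c Q).coeff k = 0 := by
    intro k hk
    have h3 : derivative^[k] Q = (Nat.factorial k : R[X]) * hasseDeriv k Q := by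
      rw [← congrFun (factorial_smul_hasseDeriv (R := R) k) Q]
      simp [nsmul_eq_mul]
    have h2 : (Nat.factorial k : R) * (hasseDeriv k Q).eval c = 0 := by
      have := h k hk
      rw [h3] at this
      simpa using this
    rcases mul_eq_zero.mp h2 with h4 | h4
    · exact absurd h4 (Nat.cast_ne_zero.2 k.factorial_ne_zero)
    · rw [taylor_coeff, h4]
  obtain ⟨m, hm⟩ := (X_pow_dvd_iff (n := r + 1) (f := taylor c Q)).mpr (fun d hd => hT d (by omega))
  have hQ : (taylor c Q).comp (Polynomial.X - Polynomial.C c) = Q := by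
    rw [taylor_apply, comp_assoc]
    simp [add_comp, sub_add_cancel]
  refine ⟨m.comp (Polynomial.X - Polynomial.C c), ?_⟩
  rw [← hQ, hm, mul_comp, pow_comp, X_comp]

lemma contDiff_mvEval (q : MvPolynomial (Fin 2) ℝ) (n : ℕ) :
    ContDiff ℝ n fun x : ℝ × ℝ => eval ![x.1, x.2] q := by
  induction q using MvPolynomial.induction_on with
  | C c => simpa using contDiff_const
  | add p q hp hq => simpa using hp.add hq
  | mul_X p i hp =>
      have he : (fun x : ℝ × ℝ => eval ![x.1, x.2] (p * X i)) =
          fun x : ℝ × ℝ => (eval ![x.1, x.2] p) * (![x.1, x.2] i) := by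
        funext x; simp
      rw [he]
      refine hp.mul ?_
      fin_cases i
      · simpa using contDiff_fst
      · simpa using contDiff_snd

lemma vec_eq (t y : ℝ) : ![t, y] = Fin.cons t (fun _ : Fin 1 => y) := by
  funext i
  refine Fin.cases ?_ ?_ i
  · rfl
  · intro j; fin_cases j; rfl

open Polynomial in
lemma map_iterate_derivative {R S : Type*} [CommSemiring R] [CommSemiring S]
    (φ : R →+* S) (q : R[X]) (k : ℕ) :
    (derivative^[k] q).map φ = derivative^[k] (q.map φ) := by
  induction k with
  | zero => rfl
  | succ k ih =>
      rw [Function.iterate_succ_apply', Function.iterate_succ_apply', ← ih, derivative_map]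

open Polynomial in
lemma iterate_derivative_sub {R : Type*} [CommRing R] (A B : R[X]) (k : ℕ) :
    derivative^[k] (A - B) = derivative^[k] A - derivative^[k] B := by
  induction k with
  | zero => rfl
  | succ k ih =>
      rw [Function.iterate_succ_apply', Function.iterate_succ_apply',
        Function.iterate_succ_apply', ih, derivative_sub]

end BR

/-- Billera–Rose smoothness criterion: let `p, p' ∈ ℝ[s,t]`,
`l = s - a`, and let `f : ℝ² → ℝ` equal `p` on `{x ≤ a}` and `p'` on `{x ≥ a}`.
Then `f` is `C^r` iff `p - p'` lies in the ideal generated by `l^(r+1)`. -/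
theorem stmt5 (p p' : MvPolynomial (Fin 2) ℝ) (a : ℝ) (r : ℕ)
    (f : ℝ × ℝ → ℝ)
    (hf₁ : ∀ x : ℝ × ℝ, x.1 ≤ a → f x = eval ![x.1, x.2] p)
    (hf₂ : ∀ x : ℝ × ℝ, a ≤ x.1 → f x = eval ![x.1, x.2] p') :
    ContDiff ℝ r f ↔
      p - p' ∈ Ideal.span {((X 0 - C a : MvPolynomial (Fin 2) ℝ)) ^ (r + 1)} := by
  constructor
  · intro H
    set Φ := MvPolynomial.finSuccEquiv ℝ 1 with hΦ
    set Qd : Polynomial (MvPolynomial (Fin 1) ℝ) := Φ (p - p') with hQd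
    have key1 : ∀ k ≤ r, ∀ y : ℝ,
        Polynomial.eval a
          (Polynomial.map (eval fun _ : Fin 1 => y) (Polynomial.derivative^[k] Qd)) = 0 := by
      intro k hk y
      have hg : ContDiff ℝ r (fun t : ℝ => f (t, y)) := H.comp (contDiff_id.prodMk contDiff_const)
      have h1 : ∀ t ∈ Set.Iic a, (fun t : ℝ => f (t, y)) t =
          Polynomial.eval t ((Φ p).map (eval fun _ : Fin 1 => y)) := by
        intro t ht
        have := hf₁ (t, y) ht
        rw [BR.vec_eq, eval_eq_eval_mv_eval'] at this
        exact this
      have h2 : ∀ t ∈ Set.Ici a, (fun t : ℝ => f (t, y)) t =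
          Polynomial.eval t ((Φ p').map (eval fun _ : Fin 1 => y)) := by
        intro t ht
        have := hf₂ (t, y) ht
        rw [BR.vec_eq, eval_eq_eval_mv_eval'] at this
        exact this
      have e1 := BR.key hg (uniqueDiffOn_Iic a) Set.self_mem_Iic h1 hk
      have e2 := BR.key hg (uniqueDiffOn_Ici a) Set.self_mem_Ici h2 hk
      have e3 := e1.symm.trans e2
      have hmap : Polynomial.map (eval fun _ : Fin 1 => y) (Polynomial.derivative^[k] Qd)
          = Polynomial.derivative^[k] ((Φ p).map (eval fun _ : Fin 1 => y))
            - Polynomial.derivative^[k] ((Φ p').map (eval fun _ : Fin 1 => y)) := by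
        rw [BR.map_iterate_derivative, hQd, map_sub, Polynomial.map_sub,
          BR.iterate_derivative_sub]
      rw [hmap, Polynomial.eval_sub, e3, sub_self]
    have key2 : ∀ k ≤ r, (Polynomial.derivative^[k] Qd).eval (C a) = 0 := by
      intro k hk
      have hz : ∀ x : Fin 1 → ℝ,
          eval x ((Polynomial.derivative^[k] Qd).eval (C a)) = eval x 0 := by
        intro x
        have hx : x = fun _ : Fin 1 => x 0 := funext fun i => by rw [Subsingleton.elim i 0]
        calc eval x ((Polynomial.derivative^[k] Qd).eval (C a))
            = Polynomial.eval₂ (eval x) ((eval x) (C a)) (Polynomial.derivative^[k] Qd) :=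
              (Polynomial.eval₂_at_apply _ _).symm
          _ = Polynomial.eval₂ (eval x) a (Polynomial.derivative^[k] Qd) := by rw [eval_C]
          _ = Polynomial.eval a ((Polynomial.derivative^[k] Qd).map (eval x)) :=
              (Polynomial.eval_map _ _).symm
          _ = 0 := by rw [hx]; exact key1 k hk (x 0)
          _ = eval x 0 := by simp
      exact MvPolynomial.funext hz
    have hdvd : (Polynomial.X - Polynomial.C (C a)) ^ (r + 1) ∣ Qd := BR.dvd_of_derivs key2
    have hl : Φ ((X 0 - C a : MvPolynomial (Fin 2) ℝ)) =
        Polynomial.X - Polynomial.C (C a) := by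
      rw [map_sub, finSuccEquiv_X_zero]
      congr 1
      rw [MvPolynomial.finSuccEquiv_apply, MvPolynomial.eval₂Hom_C]
      rfl
    obtain ⟨m, hm⟩ := hdvd
    rw [Ideal.mem_span_singleton]
    refine ⟨Φ.symm m, Φ.injective ?_⟩
    rw [map_mul, map_pow, hl, AlgEquiv.apply_symm_apply, ← hm, ← hQd]
  · intro H
    rw [Ideal.mem_span_singleton] at H
    obtain ⟨q, hq⟩ := H
    have hfeq : f = fun x : ℝ × ℝ =>
        eval ![x.1, x.2] p' + eval ![x.1, x.2] q * (min (x.1 - a) 0) ^ (r + 1) := by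
      funext x
      have hev := congrArg (eval ![x.1, x.2]) hq
      simp only [map_sub, map_mul, map_pow, eval_X, eval_C, Matrix.cons_val_zero] at hev
      rcases le_total x.1 a with hx | hx
      · rw [hf₁ x hx, min_eq_left (by linarith)]
        linarith [hev, mul_comm (eval ![x.1, x.2] q) ((x.1 - a) ^ (r + 1))]
      · rw [hf₂ x hx, min_eq_right (by linarith), zero_pow (by omega), mul_zero, add_zero]
    rw [hfeq]
    exact (BR.contDiff_mvEval p' r).add ((BR.contDiff_mvEval q r).mul
      ((BR.contDiff_minpow r).comp ((contDiff_fst.sub contDiff_const))))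
end

section
/- Let F = ⊕_{k=1}^{n} F_k be a graded vector space with ordered summands and D ⊆ F a subspace. For each k, let G_k ⊆ F_k be the set of initials in(p) with p ∈ D and in(p) ∈ F_k arising from a fixed generating family of D. Then dim(F/D)_d ≤ Σ_k (dim (F_k)_d − dim (span G_k)_d). -/
open Module Submodule


/-- let `F = ⊕_k F_k` with ordered summands, `D ⊆ F` a subspace
spanned by a generating family `G`, and for each `k` let `G_k ⊆ F_k` be the set
of initials of members of `G` landing in `F_k`.  Then
`dim (F/D) ≤ Σ_k (dim F_k − dim span G_k)`. -/
theorem stmt16 (n : ℕ) (F : Fin n → Type*) [∀ k, AddCommGroup (F k)]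
    [∀ k, Module ℝ (F k)] [∀ k, FiniteDimensional ℝ (F k)]
    (D : Submodule ℝ (∀ k, F k)) (G : Set (∀ k, F k))
    (hG : Submodule.span ℝ G = D) :
    (Module.finrank ℝ ((∀ k, F k) ⧸ D) : ℤ) ≤
      ∑ k : Fin n, ((Module.finrank ℝ (F k) : ℤ) -
        Module.finrank ℝ (Submodule.span ℝ
          {x : F k | ∃ p ∈ G, p k ≠ 0 ∧ (∀ j, k < j → p j = 0) ∧ x = p k})) := by
  classical
  -- filtration
  set T : ℕ → Submodule ℝ (∀ k, F k) :=
    fun m => D ⊓ (⨅ j : Fin n, ⨅ _ : m ≤ (j : ℕ), LinearMap.ker (LinearMap.proj j)) with hT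
  have memT : ∀ m p, p ∈ T m ↔ p ∈ D ∧ ∀ j : Fin n, m ≤ (j : ℕ) → p j = 0 := by
    intro m p
    simp [hT, Submodule.mem_inf, Submodule.mem_iInf]
  have hTn : T n = D := by
    ext p
    rw [memT]
    simp only [and_iff_left_iff_imp]
    intro _ j hj
    exact absurd j.isLt (by omega)
  have hT0 : T 0 = ⊥ := by
    ext p
    rw [memT, Submodule.mem_bot]
    constructor
    · rintro ⟨-, h⟩; funext j; exact h j (Nat.zero_le _)
    · rintro rfl; exact ⟨D.zero_mem, fun _ _ => rfl⟩
  -- rank nullity step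
  have key : ∀ (k : Fin n),
      (finrank ℝ (T ((k : ℕ) + 1)) : ℤ) =
        finrank ℝ ((T ((k : ℕ) + 1)).map (LinearMap.proj (R := ℝ) (φ := F) k))
          + finrank ℝ (T (k : ℕ)) := by
    intro k
    have h := LinearMap.finrank_range_add_finrank_ker
      ((LinearMap.proj (R := ℝ) (φ := F) k).domRestrict (T ((k : ℕ) + 1)))
    rw [LinearMap.range_domRestrict, LinearMap.ker_domRestrict] at h
    have hker : finrank ℝ (Submodule.comap (T ((k : ℕ) + 1)).subtype
        (LinearMap.ker (LinearMap.proj (R := ℝ) (φ := F) k))) = finrank ℝ (T (k : ℕ)) := by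
      rw [← Submodule.finrank_map_subtype_eq, Submodule.map_comap_subtype]
      have heq : T ((k : ℕ) + 1) ⊓ LinearMap.ker (LinearMap.proj (R := ℝ) (φ := F) k)
          = T (k : ℕ) := by
        ext p
        rw [Submodule.mem_inf, LinearMap.mem_ker, memT, memT]
        constructor
        · rintro ⟨⟨hD, h1⟩, h0⟩
          refine ⟨hD, fun j hj => ?_⟩
          rcases eq_or_lt_of_le hj with h | h
          · have : j = k := Fin.ext h.symm
            subst this; exact h0
          · exact h1 j h
        · rintro ⟨hD, h1⟩
          exact ⟨⟨hD, fun j hj => h1 j (Nat.le_of_succ_le hj)⟩, h1 k le_rfl⟩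
      rw [heq]
    rw [hker] at h
    exact_mod_cast h.symm
  -- telescoping
  have hsum : ∑ k : Fin n,
      (finrank ℝ ((T ((k : ℕ) + 1)).map (LinearMap.proj (R := ℝ) (φ := F) k)) : ℤ)
        = finrank ℝ D := by
    have := Finset.sum_range_sub (fun m => (finrank ℝ (T m) : ℤ)) n
    rw [hTn, hT0] at this
    simp only [finrank_bot, Nat.cast_zero, sub_zero] at this
    rw [← this, Finset.sum_range]
    refine Finset.sum_congr rfl fun k _ => ?_
    have := key k
    omega
  -- spans are inside images
  have hspan : ∀ k : Fin n,
      Submodule.span ℝ {x : F k | ∃ p ∈ G, p k ≠ 0 ∧ (∀ j, k < j → p j = 0) ∧ x = p k}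
        ≤ (T ((k : ℕ) + 1)).map (LinearMap.proj (R := ℝ) (φ := F) k) := by
    intro k
    rw [Submodule.span_le]
    rintro x ⟨p, hpG, -, hzero, rfl⟩
    refine ⟨p, ?_, rfl⟩
    rw [SetLike.mem_coe, memT]
    refine ⟨hG ▸ Submodule.subset_span hpG, fun j hj => hzero j ?_⟩
    exact_mod_cast Nat.lt_of_succ_le hj
  -- assemble
  have hq : (finrank ℝ ((∀ k, F k) ⧸ D) : ℤ) = (finrank ℝ (∀ k, F k) : ℤ) - finrank ℝ D := by
    have := Submodule.finrank_quotient_add_finrank D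
    omega
  have hpi : (finrank ℝ (∀ k, F k) : ℤ) = ∑ k : Fin n, (finrank ℝ (F k) : ℤ) := by
    rw [Module.finrank_pi_fintype]
    push_cast
    rfl
  have hsplit : ∑ k : Fin n, ((finrank ℝ (F k) : ℤ)
      - finrank ℝ ((T ((k : ℕ) + 1)).map (LinearMap.proj (R := ℝ) (φ := F) k)))
      = ∑ k : Fin n, (finrank ℝ (F k) : ℤ) - ∑ k : Fin n,
        (finrank ℝ ((T ((k : ℕ) + 1)).map (LinearMap.proj (R := ℝ) (φ := F) k)) : ℤ) :=
    Finset.sum_sub_distrib _ _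
  have hstep : ∑ k : Fin n, ((finrank ℝ (F k) : ℤ)
      - finrank ℝ ((T ((k : ℕ) + 1)).map (LinearMap.proj (R := ℝ) (φ := F) k)))
      ≤ ∑ k : Fin n, ((Module.finrank ℝ (F k) : ℤ) -
        Module.finrank ℝ (Submodule.span ℝ
          {x : F k | ∃ p ∈ G, p k ≠ 0 ∧ (∀ j, k < j → p j = 0) ∧ x = p k})) := by
    refine Finset.sum_le_sum fun k _ => ?_
    have h := Submodule.finrank_mono (hspan k)
    have h2 : (finrank ℝ (Submodule.span ℝ
        {x : F k | ∃ p ∈ G, p k ≠ 0 ∧ (∀ j, k < j → p j = 0) ∧ x = p k}) : ℤ)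
        ≤ (finrank ℝ ((T ((k : ℕ) + 1)).map (LinearMap.proj (R := ℝ) (φ := F) k)) : ℤ) := by
      exact_mod_cast h
    linarith
  rw [hq, hpi]
  linarith
end
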